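/- Let F_q be a finite field, A ⊆ F_q^n, and D, M ∈ N. If binom(M+n-1, n) · |A| < binom(D+n, n), then there exists a nonzero polynomial P ∈ F_q[x_1,…,x_n] of degree at most D that vanishes on A with multiplicity M (i.e., mult(P, a) ≥ M for all a ∈ A). -/

import Mathlib

open MvPolynomial

/-- The β-th Hasse derivative of a multivariate polynomial `P`: the coefficient of `y^β`
in `P(x + y)`, where the outer variables are `y` and the coefficients are polynomials in `x`. -/
noncomputable def hasseDeriv {F : Type*} [CommRing F] {n : ℕ}
    (β : Fin n →₀ ℕ) (P : MvPolynomial (Fin n) F) : MvPolynomial (Fin n) F :=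
  MvPolynomial.coeff β
    (MvPolynomial.eval₂ ((MvPolynomial.C).comp (MvPolynomial.C))
      (fun i => MvPolynomial.C (MvPolynomial.X i) + MvPolynomial.X i) P)

/-- The multiplicity of `P` at a point `a`: the largest `M` such that all Hasse derivatives of
order `< M` vanish at `a` (`∞` if no largest such `M` exists). -/
noncomputable def mult {F : Type*} [CommRing F] {n : ℕ}
    (P : MvPolynomial (Fin n) F) (a : Fin n → F) : ℕ∞ :=
  sSup {M : ℕ∞ | ∀ β : Fin n →₀ ℕ, ((∑ i, β i : ℕ) : ℕ∞) < M →
    MvPolynomial.eval a (hasseDeriv β P) = 0}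

private def funSumEquiv (n d : ℕ) :
    {g : Fin n → ℕ // ∑ i, g i ≤ d} ≃ {P : Fin (n + 1) → ℕ // ∑ i, P i = d} where
  toFun g := ⟨Fin.cons (d - ∑ i, g.1 i) g.1, by
    rw [Fin.sum_cons]; have := g.2; omega⟩
  invFun P := ⟨Fin.tail P.1, by
    have := P.2; rw [Fin.sum_univ_succ] at this
    show ∑ i : Fin n, P.1 i.succ ≤ d; omega⟩
  left_inv g := Subtype.ext (Fin.tail_cons (α := fun _ : Fin (n+1) => ℕ) (d - ∑ i, g.1 i) g.1)
  right_inv P := Subtype.ext (by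
    have h := P.2; rw [Fin.sum_univ_succ] at h
    have h2 : d - ∑ i : Fin n, Fin.tail P.1 i = P.1 0 := by
      show d - ∑ i : Fin n, P.1 i.succ = P.1 0; omega
    show Fin.cons (d - ∑ i : Fin n, Fin.tail P.1 i) (Fin.tail P.1) = P.1
    rw [h2]
    exact Fin.cons_self_tail P.1)

/-- Monomials of degree ≤ d in n variables correspond to `Sym (Fin (n+1)) d`. -/
private noncomputable def degLEEquiv (n d : ℕ) :
    {β : Fin n →₀ ℕ // (β.sum fun _ e => e) ≤ d} ≃ Sym (Fin (n + 1)) d := by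
  classical
  refine Equiv.trans ?_ ((funSumEquiv n d).trans (Sym.equivNatSumOfFintype (Fin (n + 1)) d).symm)
  exact Finsupp.equivFunOnFinite.subtypeEquiv fun β => by
    rw [Finsupp.sum_fintype _ _ (fun _ => rfl)]
    exact Iff.rfl

private lemma card_degLE (n d : ℕ) :
    Nat.card {β : Fin n →₀ ℕ // (β.sum fun _ e => e) ≤ d} = (d + n).choose n := by
  classical
  rw [Nat.card_congr (degLEEquiv n d), Nat.card_eq_fintype_card, Sym.card_sym_eq_choose,
    Fintype.card_fin]
  have h1 : n + 1 + d - 1 = d + n := by omega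
  rw [h1, Nat.choose_symm_add]

/-- Evaluation of the β-th Hasse derivative at a point, as a linear map. -/
private noncomputable def hdLinear {F : Type*} [CommRing F] {n : ℕ}
    (β : Fin n →₀ ℕ) (a : Fin n → F) : MvPolynomial (Fin n) F →ₗ[F] F where
  toFun P := MvPolynomial.eval a (hasseDeriv β P)
  map_add' P Q := by
    simp [hasseDeriv, eval₂_add, coeff_add]
  map_smul' c P := by
    simp only [hasseDeriv, smul_eq_C_mul, eval₂_mul, eval₂_C, RingHom.coe_comp,
      Function.comp_apply, coeff_C_mul, map_mul, eval_C, RingHom.id_apply, smul_eq_mul]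

/-- Lemma 2.4: if `binom(M+n-1, n) · |A| < binom(D+n, n)`, then there is a nonzero polynomial
of degree at most `D` vanishing on `A` with multiplicity `M`. -/
theorem exists_poly_vanishing_with_multiplicity {F : Type*} [Field F] [Fintype F] {n : ℕ}
    (A : Finset (Fin n → F)) (D M : ℕ)
    (h : Nat.choose (M + n - 1) n * A.card < Nat.choose (D + n) n) :
    ∃ P : MvPolynomial (Fin n) F, P ≠ 0 ∧ P.totalDegree ≤ D ∧
      ∀ a ∈ A, (M : ℕ∞) ≤ mult P a := by
  classical
  rcases Nat.eq_zero_or_pos M with hM | hM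
  · subst hM
    refine ⟨1, one_ne_zero, by simp, fun a _ => ?_⟩
    simp only [Nat.cast_zero]
    exact zero_le
  -- index types
  set T := {β : Fin n →₀ ℕ // (β.sum fun _ e => e) < M} with hT
  have eT : T ≃ {β : Fin n →₀ ℕ // (β.sum fun _ e => e) ≤ M - 1} :=
    Equiv.subtypeEquivRight fun β => by omega
  haveI : Fintype T := Fintype.ofEquiv _ (eT.trans (degLEEquiv n (M - 1))).symm
  have cardT : Fintype.card T = (M + n - 1).choose n := by
    have := card_degLE n (M - 1)
    rw [← Nat.card_congr eT, Nat.card_eq_fintype_card] at this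
    rw [this]
    congr 1
    omega
  -- the space of polynomials of degree ≤ D
  set S : Set (Fin n →₀ ℕ) := {β | (β.sum fun _ e => e) ≤ D} with hS
  haveI : Fintype S := Fintype.ofEquiv _ (degLEEquiv n D).symm
  set V := restrictTotalDegree (Fin n) F D with hV
  have bV : Module.Basis S F V := basisRestrictSupport F S
  have cardS : Fintype.card S = (D + n).choose n := by
    rw [← Nat.card_eq_fintype_card]
    exact card_degLE n D
  have frV : Module.finrank F V = (D + n).choose n := by
    rw [Module.finrank_eq_card_basis bV, cardS]
  -- the constraint map
  set Φ : V →ₗ[F] ((A × T) → F) :=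
    LinearMap.pi (fun p => (hdLinear p.2.1 p.1.1).comp V.subtype) with hΦ
  have hker : LinearMap.ker Φ ≠ ⊥ := by
    intro hbot
    have hinj : Function.Injective Φ := LinearMap.ker_eq_bot.mp hbot
    have hle := LinearMap.finrank_le_finrank_of_injective hinj
    rw [frV, Module.finrank_fintype_fun_eq_card, Fintype.card_prod, Fintype.card_coe,
      cardT] at hle
    have : (M + n - 1).choose n * A.card = A.card * (M + n - 1).choose n := Nat.mul_comm _ _
    omega
  obtain ⟨p, hpker, hp0⟩ := (Submodule.ne_bot_iff _).mp hker
  refine ⟨p.1, ?_, (mem_restrictTotalDegree (Fin n) D p.1).mp p.2, ?_⟩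
  · simpa using hp0
  · intro a ha
    apply le_sSup
    intro β hβ
    have hβ' : (β.sum fun _ e => e) < M := by
      rw [Finsupp.sum_fintype _ _ (fun _ => rfl)]
      exact_mod_cast hβ
    have := congrFun hpker (⟨a, ha⟩, ⟨β, hβ'⟩)
    simp [hΦ, hdLinear] at this
    exact this
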